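/- Let F : [-1,1] → [0,∞) be continuous on [-1,1], three times continuously differentiable on (-1,1), with F'(0) = 0, F''(r) ≥ -K for some K > 0 and all r ∈ (-1,1), and F'(r) → ±∞ as r → (±1)∓. Then there exist constants C₀, C₁ > 0 such that F'(r)·r ≥ C₀ r² - C₁ for all r ∈ (-1,1). -/
import Mathlib


open Real Set Filter

/-- Under assumption H1, the coercivity estimate F'(r)·r ≥ C₀r² - C₁ holds. -/
theorem stmt_1 (K : ℝ) (hK : 0 < K) (F F' F'' : ℝ → ℝ)
    (hFcont : ContinuousOn F (Icc (-1:ℝ) 1))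
    (hFnonneg : ∀ r ∈ Icc (-1:ℝ) 1, 0 ≤ F r)
    (hFC3 : ContDiffOn ℝ 3 F (Ioo (-1:ℝ) 1))
    (hd1 : ∀ r ∈ Ioo (-1:ℝ) 1, HasDerivAt F (F' r) r)
    (hd2 : ∀ r ∈ Ioo (-1:ℝ) 1, HasDerivAt F' (F'' r) r)
    (hF'0 : F' 0 = 0)
    (hlb : ∀ r ∈ Ioo (-1:ℝ) 1, -K ≤ F'' r)
    (htop : Tendsto F' (nhdsWithin 1 (Iio 1)) atTop)
    (hbot : Tendsto F' (nhdsWithin (-1) (Ioi (-1))) atBot) :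
    ∃ C₀ > (0:ℝ), ∃ C₁ > (0:ℝ), ∀ r ∈ Ioo (-1:ℝ) 1, F' r * r ≥ C₀ * r^2 - C₁ := by
  -- F' is continuous on Ioo (-1) 1
  have hF'cont : ContinuousOn F' (Ioo (-1:ℝ) 1) := fun r hr =>
    ((hd2 r hr).continuousAt).continuousWithinAt
  -- From htop: F' ≥ 1 near 1
  obtain ⟨ε₁, hε₁, h₁⟩ := Metric.mem_nhdsWithin_iff.1
    (htop.eventually (eventually_ge_atTop (1:ℝ)))
  -- From hbot: F' ≤ -1 near -1
  obtain ⟨ε₂, hε₂, h₂⟩ := Metric.mem_nhdsWithin_iff.1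
    (hbot.eventually (eventually_le_atBot (-1:ℝ)))
  set u : ℝ := max (1/2) (1 - ε₁/2) with hu
  set l : ℝ := min (-1/2) (-1 + ε₂/2) with hl
  have hu0 : (0:ℝ) < u := lt_of_lt_of_le (by norm_num) (le_max_left _ _)
  have hu1 : u < 1 := by
    apply max_lt (by norm_num); linarith
  have hl0 : l < 0 := lt_of_le_of_lt (min_le_left _ _) (by norm_num)
  have hl1 : (-1:ℝ) < l := by
    apply lt_min (by norm_num); linarith
  -- minimum of F' r * r on [l, u]
  have hcomp : IsCompact (Icc l u) := isCompact_Icc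
  have hsub : Icc l u ⊆ Ioo (-1:ℝ) 1 := fun x hx =>
    ⟨lt_of_lt_of_le hl1 hx.1, lt_of_le_of_lt hx.2 hu1⟩
  have hcontm : ContinuousOn (fun r => F' r * r) (Icc l u) :=
    (hF'cont.mono hsub).mul continuousOn_id
  obtain ⟨x₀, hx₀, hmin⟩ := hcomp.exists_isMinOn ⟨0, by constructor <;> linarith⟩ hcontm
  set M₀ : ℝ := F' x₀ * x₀
  refine ⟨1, one_pos, 1 - min M₀ 0, by
    have := min_le_right M₀ 0; linarith, ?_⟩
  intro r hr
  obtain ⟨hr1, hr2⟩ := hr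
  rcases le_or_gt u r with hcase | hcase
  · -- right region
    have hdist : dist r 1 < ε₁ := by
      rw [Real.dist_eq, abs_of_nonpos (by linarith)]
      have : 1 - ε₁/2 ≤ u := le_max_right _ _
      linarith
    have hF1 : 1 ≤ F' r := h₁ ⟨Metric.mem_ball.2 hdist, hr2⟩
    have hrpos : 0 < r := lt_of_lt_of_le hu0 hcase
    have hmn : min M₀ 0 ≤ 0 := min_le_right _ _
    nlinarith
  rcases le_or_gt r l with hcase2 | hcase2
  · -- left region
    have hdist : dist r (-1) < ε₂ := by
      rw [Real.dist_eq, abs_of_nonneg (by linarith)]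
      have : l ≤ -1 + ε₂/2 := min_le_right _ _
      linarith
    have hF1 : F' r ≤ -1 := h₂ ⟨Metric.mem_ball.2 hdist, hr1⟩
    have hrneg : r < 0 := lt_of_le_of_lt hcase2 hl0
    have hmn : min M₀ 0 ≤ 0 := min_le_right _ _
    nlinarith
  · -- middle region
    have hmem : r ∈ Icc l u := ⟨le_of_lt hcase2, le_of_lt hcase⟩
    have h1 : M₀ ≤ F' r * r := hmin hmem
    have hmn : min M₀ 0 ≤ M₀ := min_le_left _ _
    have hr2' : r^2 ≤ 1 := by nlinarith
    linarith
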